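/- Let p and q be distinct primes and let H be a finite inner abelian group with a normal elementary abelian Sylow p-subgroup P of order p^n and a cyclic Sylow q-subgroup Q = ⟨b⟩, so that H = P⟨b⟩. Then: (i) the centralizer C_P(Q) is trivial; (ii) conjugation by b induces a fixed-point-free automorphism of P of order exactly q (in particular b^q centralizes P); (iii) for every non-identity element a ∈ P, the subgroup generated by the Q-orbit a^Q = {b^{-i} a b^{i} : 0 ≤ i < q} is all of P; (iv) n < q; and (v) q divides p^n − 1. -/

import Mathlib

/-- The Haar graph of a group `H` with connection set `S ⊆ H`: the bipartite
graph on two copies of `H` (indexed by `Bool`; `false` is the copy `H₀`,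
`true` is the copy `H₁`) in which `h₀` is adjacent to `(s*h)₁` for `s ∈ S`. -/
def haarGraph {H : Type*} [Group H] (S : Set H) : SimpleGraph (Bool × H) where
  Adj u v := (u.1 = false ∧ v.1 = true ∧ v.2 * u.2⁻¹ ∈ S) ∨
             (u.1 = true ∧ v.1 = false ∧ u.2 * v.2⁻¹ ∈ S)
  symm := by
    constructor
    rintro ⟨i, x⟩ ⟨j, y⟩ (⟨h1, h2, h3⟩ | ⟨h1, h2, h3⟩)
    · exact Or.inr ⟨h2, h1, h3⟩
    · exact Or.inl ⟨h2, h1, h3⟩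
  loopless := by
    constructor
    rintro ⟨i, x⟩ (⟨h1, h2, _⟩ | ⟨h1, h2, _⟩) <;> simp_all

/-- A graph is a Cayley graph if its automorphism group contains a subgroup
acting regularly on the vertex set. -/
def IsCayleyGraph {V : Type*} (Γ : SimpleGraph V) : Prop :=
  ∃ G : Subgroup (Equiv.Perm V),
    (∀ g ∈ G, ∀ u v : V, Γ.Adj (g u) (g v) ↔ Γ.Adj u v) ∧
    (∀ u v : V, ∃! g : Equiv.Perm V, g ∈ G ∧ g u = v)

/-- A graph is vertex-transitive if its automorphism group acts transitively
on the vertices. -/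
def IsVertexTransitive {V : Type*} (Γ : SimpleGraph V) : Prop :=
  ∀ u v : V, ∃ f : Γ ≃g Γ, f u = v

/-- A group is inner abelian if it is non-abelian but every proper subgroup
is abelian. -/
def IsInnerAbelian (H : Type*) [Group H] : Prop :=
  (¬ ∀ a b : H, a * b = b * a) ∧
    ∀ K : Subgroup H, K ≠ ⊤ → ∀ a b : H, a ∈ K → b ∈ K → a * b = b * a

lemma IAaux_conj_zpow {H : Type*} [Group H] (b : H) (W : Subgroup H)
    (h1 : ∀ v ∈ W, b * v * b⁻¹ ∈ W) (h2 : ∀ v ∈ W, b⁻¹ * v * b ∈ W) :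
    ∀ k : ℤ, ∀ v ∈ W, b ^ k * v * (b ^ k)⁻¹ ∈ W := by
  intro k
  induction k using Int.induction_on with
  | zero => intro v hv; simpa using hv
  | succ i ih =>
      intro v hv
      have := h1 _ (ih v hv)
      have e : b ^ ((i : ℤ) + 1) * v * (b ^ ((i : ℤ) + 1))⁻¹
          = b * (b ^ (i : ℤ) * v * (b ^ (i : ℤ))⁻¹) * b⁻¹ := by
        rw [zpow_add, zpow_one]; group
      rwa [e]
  | pred i ih =>
      intro v hv
      have := h2 _ (ih v hv)
      have e : b ^ (-(i : ℤ) - 1) * v * (b ^ (-(i : ℤ) - 1))⁻¹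
          = b⁻¹ * (b ^ (-(i : ℤ)) * v * (b ^ (-(i : ℤ)))⁻¹) * b := by
        rw [sub_eq_add_neg, zpow_add, zpow_neg_one]; group
      rwa [e]

lemma IAaux_exists_sup {H : Type*} [Group H] (b : H) (W : Subgroup H)
    (h1 : ∀ v ∈ W, b * v * b⁻¹ ∈ W) (h2 : ∀ v ∈ W, b⁻¹ * v * b ∈ W) :
    ∃ K : Subgroup H, ∀ h : H, h ∈ K ↔ ∃ w ∈ W, ∃ k : ℤ, h = w * b ^ k := by
  have hc := IAaux_conj_zpow b W h1 h2
  refine ⟨{ carrier := {h : H | ∃ w ∈ W, ∃ k : ℤ, h = w * b ^ k}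
            one_mem' := ⟨1, W.one_mem, 0, by simp⟩
            mul_mem' := ?_
            inv_mem' := ?_ }, fun h => Iff.rfl⟩
  · rintro x y ⟨w, hw, i, rfl⟩ ⟨v, hv, j, rfl⟩
    refine ⟨w * (b ^ i * v * (b ^ i)⁻¹), W.mul_mem hw (hc i v hv), i + j, ?_⟩
    rw [zpow_add]; group
  · rintro x ⟨w, hw, i, rfl⟩
    refine ⟨b ^ (-i) * w⁻¹ * (b ^ (-i))⁻¹, hc (-i) _ (W.inv_mem hw), -i, ?_⟩
    group

lemma IAaux_pow_mod {G : Type*} [Group G] (p : ℕ) (g : G) (hg : g ^ p = 1) (m : ℕ) :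
    g ^ m = g ^ (m % p) := by
  conv_lhs => rw [← Nat.div_add_mod m p]
  rw [pow_add, pow_mul, hg, one_pow, one_mul]

lemma IAaux_card_le {G : Type*} [CommGroup G] [Finite G] (p : ℕ) (hp : 0 < p)
    (hexp : ∀ g : G, g ^ p = 1) (k : ℕ) (g : Fin k → G)
    (hgen : Subgroup.closure (Set.range g) = ⊤) :
    Nat.card G ≤ p ^ k := by
  have : NeZero p := ⟨hp.ne'⟩
  set f : (Fin k → Fin p) → G := fun e => ∏ i, g i ^ (e i : ℕ) with hf
  have hsurj : Function.Surjective f := by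
    intro x
    let T : Subgroup G :=
      { carrier := Set.range f
        one_mem' := ⟨fun _ => ⟨0, hp⟩, by simp [hf]⟩
        mul_mem' := by
          rintro a c ⟨e, rfl⟩ ⟨e', rfl⟩
          refine ⟨e + e', ?_⟩
          simp only [hf, ← Finset.prod_mul_distrib, ← pow_add]
          refine Finset.prod_congr rfl fun i _ => ?_
          have : ((e + e') i : ℕ) = ((e i : ℕ) + (e' i : ℕ)) % p := by
            simp [Fin.add_def]
          rw [this, ← IAaux_pow_mod p (g i) (hexp (g i))]
        inv_mem' := by
          rintro a ⟨e, rfl⟩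
          refine ⟨fun i => ⟨(p - (e i : ℕ)) % p, Nat.mod_lt _ hp⟩, ?_⟩
          simp only [hf, ← Finset.prod_inv_distrib]
          refine Finset.prod_congr rfl fun i _ => ?_
          show g i ^ ((p - (e i : ℕ)) % p) = (g i ^ (e i : ℕ))⁻¹
          rw [← IAaux_pow_mod p (g i) (hexp (g i)) (p - (e i : ℕ))]
          rw [eq_inv_iff_mul_eq_one, ← pow_add,
            Nat.sub_add_cancel (le_of_lt (e i).isLt), hexp] }
    have hT : Subgroup.closure (Set.range g) ≤ T := by
      rw [Subgroup.closure_le]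
      rintro _ ⟨i, rfl⟩
      refine ⟨Pi.single i ⟨1 % p, Nat.mod_lt _ hp⟩, ?_⟩
      simp only [hf]
      rw [Finset.prod_eq_single i]
      · simp [Pi.single_apply, ← IAaux_pow_mod p (g i) (hexp (g i)) 1]
      · intro j _ hj; simp [Pi.single_apply, hj]
      · simp
    have : x ∈ T := hT (by rw [hgen]; trivial)
    exact this
  calc Nat.card G ≤ Nat.card (Fin k → Fin p) := Nat.card_le_card_of_surjective f hsurj
    _ = p ^ k := by simp [Nat.card_eq_fintype_card]


theorem inner_abelian_pq_structure
    {H : Type*} [Group H] [Finite H] (p q : ℕ) (hp : p.Prime) (hq : q.Prime)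
    (hpq : p ≠ q) (hIA : IsInnerAbelian H)
    (P : Sylow p H) (hPnorm : (P : Subgroup H).Normal)
    (n : ℕ) (hPcard : Nat.card (P : Subgroup H) = p ^ n)
    (hPelem : ∀ x ∈ (P : Subgroup H), x ^ p = 1)
    (hPab : ∀ x ∈ (P : Subgroup H), ∀ y ∈ (P : Subgroup H), x * y = y * x)
    (b : H) (Q : Sylow q H) (hQ : (Q : Subgroup H) = Subgroup.zpowers b)
    (hHPQ : (P : Subgroup H) ⊔ Subgroup.zpowers b = ⊤) :
    -- (i) the centralizer of `Q` in `P` is trivial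
    (∀ x ∈ (P : Subgroup H), (∀ y ∈ Subgroup.zpowers b, x * y = y * x) → x = 1) ∧
    -- (ii) conjugation by `b` is fixed-point-free on `P` ...
    (∀ x ∈ (P : Subgroup H), x ≠ 1 → b⁻¹ * x * b ≠ x) ∧
    -- ... of order exactly `q`: in particular `b ^ q` centralizes `P`
    (∀ x ∈ (P : Subgroup H), (b ^ q)⁻¹ * x * b ^ q = x) ∧
    -- (iii) the `Q`-orbit of any non-identity `a ∈ P` generates `P`
    (∀ a ∈ (P : Subgroup H), a ≠ 1 →
      Subgroup.closure {x : H | ∃ i : ℕ, i < q ∧ x = (b ^ i)⁻¹ * a * b ^ i} =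
        (P : Subgroup H)) ∧
    -- (iv) and (v)
    n < q ∧ q ∣ p ^ n - 1 := by
  set Pg : Subgroup H := (P : Subgroup H) with hPg
  -- p and q are coprime
  have hcop : Nat.Coprime p q := (Nat.coprime_primes hp hq).mpr hpq
  -- killing lemma
  have hkill : ∀ x : H, x ^ p = 1 → x ^ q = 1 → x = 1 := by
    intro x h1 h2
    have d1 : orderOf x ∣ p := orderOf_dvd_of_pow_eq_one h1
    have d2 : orderOf x ∣ q := orderOf_dvd_of_pow_eq_one h2
    have : orderOf x ∣ 1 := hcop ▸ Nat.dvd_gcd d1 d2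
    rw [Nat.dvd_one] at this
    exact orderOf_eq_one_iff.mp this
  -- b ≠ 1
  have hbne : b ≠ 1 := by
    intro hb1
    rcases hIA with ⟨hna, _⟩
    apply hna
    have hPt : Pg = ⊤ := by
      rw [hb1] at hHPQ
      simpa using hHPQ
    intro x y
    exact hPab x (by rw [hPt]; trivial) y (by rw [hPt]; trivial)
  -- order of b is a power of q, divisible by q
  have hbordpow : ∃ m : ℕ, 0 < m ∧ orderOf b = q ^ m := by
    have hbQ : b ∈ (Q : Subgroup H) := by rw [hQ]; exact Subgroup.mem_zpowers b
    obtain ⟨k, hk⟩ := Q.2 ⟨b, hbQ⟩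
    have hk' : b ^ (q ^ k) = 1 := by
      have := congrArg (Subgroup.subtype _) hk
      simpa using this
    have hd : orderOf b ∣ q ^ k := orderOf_dvd_of_pow_eq_one hk'
    obtain ⟨m, hm, hbm⟩ := (Nat.dvd_prime_pow hq).mp hd
    refine ⟨m, ?_, hbm⟩
    rcases Nat.eq_zero_or_pos m with hm0 | hm0
    · exfalso
      apply hbne
      rw [← orderOf_eq_one_iff, hbm, hm0, pow_zero]
    · exact hm0
  have hbord : q ∣ orderOf b := by
    obtain ⟨m, hm0, hbm⟩ := hbordpow
    rw [hbm]
    exact dvd_pow_self q hm0.ne'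
  -- trivial intersection
  have htriv : ∀ x : H, x ∈ Pg → x ∈ Subgroup.zpowers b → x = 1 := by
    intro x hxP hxB
    have h1 : x ^ p = 1 := hPelem x hxP
    obtain ⟨k, hk⟩ := hxB
    have h2 : x ^ orderOf b = 1 := by
      rw [← hk, ← zpow_natCast, ← zpow_mul, mul_comm, zpow_mul, zpow_natCast,
        pow_orderOf_eq_one, one_zpow]
    have d1 : orderOf x ∣ p := orderOf_dvd_of_pow_eq_one h1
    have d2 : orderOf x ∣ orderOf b := orderOf_dvd_of_pow_eq_one h2
    have hcop2 : Nat.Coprime p (orderOf b) := by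
      obtain ⟨m, hm0, hbm⟩ := hbordpow
      rw [hbm]
      exact hcop.pow_right m
    have : orderOf x ∣ 1 := hcop2 ▸ Nat.dvd_gcd d1 d2
    rw [Nat.dvd_one] at this
    exact orderOf_eq_one_iff.mp this
  -- conjugation preserves Pg, both directions
  have hPg1 : ∀ v ∈ Pg, b * v * b⁻¹ ∈ Pg := fun v hv => hPnorm.conj_mem v hv b
  have hPg2 : ∀ v ∈ Pg, b⁻¹ * v * b ∈ Pg := by
    intro v hv
    have := hPnorm.conj_mem v hv b⁻¹
    simpa using this
  -- decomposition of H
  obtain ⟨KH, hKH⟩ := IAaux_exists_sup b Pg hPg1 hPg2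
  have hKHtop : KH = ⊤ := by
    rw [← top_le_iff, ← hHPQ]
    refine sup_le ?_ ?_
    · intro w hw
      exact (hKH w).mpr ⟨w, hw, 0, by simp⟩
    · rw [Subgroup.zpowers_le]
      exact (hKH b).mpr ⟨1, Pg.one_mem, 1, by simp⟩
  have hdecomp : ∀ h : H, ∃ w ∈ Pg, ∃ k : ℤ, h = w * b ^ k := by
    intro h
    exact (hKH h).mp (by rw [hKHtop]; trivial)
  -- b ^ q centralizes P
  have hbq : ∀ x ∈ Pg, b ^ q * x = x * b ^ q := by
    obtain ⟨K, hK⟩ := IAaux_exists_sup (b ^ q) Pg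
      (fun v hv => hPnorm.conj_mem v hv (b ^ q))
      (by intro v hv; have := hPnorm.conj_mem v hv (b ^ q)⁻¹; simpa using this)
    have hKne : K ≠ ⊤ := by
      intro hKtop
      have hbK : b ∈ K := by rw [hKtop]; trivial
      obtain ⟨w, hw, k, hwk⟩ := (hK b).mp hbK
      have hwz : w = b ^ ((1 : ℤ) - q * k) := by
        have h1 : w = b * ((b ^ q) ^ k)⁻¹ := eq_mul_inv_iff_mul_eq.mpr hwk.symm
        rw [h1, ← zpow_natCast b q, ← zpow_mul, sub_eq_add_neg, zpow_add,
          zpow_one, zpow_neg]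
      have hw1 : w = 1 := htriv w hw ⟨(1 : ℤ) - q * k, hwz.symm⟩
      have hb1 : b ^ ((1 : ℤ) - q * k) = 1 := by rw [← hwz, hw1]
      have hdvd : ((orderOf b : ℤ)) ∣ (1 : ℤ) - q * k :=
        orderOf_dvd_iff_zpow_eq_one.mpr hb1
      have hq1 : (q : ℤ) ∣ 1 := by
        have h1 : (q : ℤ) ∣ (orderOf b : ℤ) := Int.natCast_dvd_natCast.mpr hbord
        have h2 : (q : ℤ) ∣ (1 : ℤ) - q * k := h1.trans hdvd
        have h3 : (q : ℤ) ∣ q * k := Dvd.intro k rfl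
        have h4 : (q : ℤ) ∣ (1 - q * k) + q * k := dvd_add h2 h3
        simpa using h4
      have h5 : (q : ℤ) ≤ 1 := Int.le_of_dvd one_pos hq1
      have := hq.one_lt
      omega
    intro x hx
    exact hIA.2 K hKne (b ^ q) x ((hK _).mpr ⟨1, Pg.one_mem, 1, by simp⟩)
      ((hK _).mpr ⟨x, hx, 0, by simp⟩)
  -- H is non-abelian, so b does not centralize P
  have hnotab : ∃ c ∈ Pg, b⁻¹ * c * b ≠ c := by
    by_contra hcon
    push_neg at hcon
    apply hIA.1
    have hcomm : ∀ c ∈ Pg, Commute b c := by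
      intro c hc
      have := hcon c hc
      have h2 : c * b = b * c := by
        have := congrArg (fun z => b * z) this
        simpa [mul_assoc] using this
      exact h2.symm
    intro x y
    obtain ⟨w, hw, i, rfl⟩ := hdecomp x
    obtain ⟨v, hv, j, rfl⟩ := hdecomp y
    have c1 : Commute w v := hPab w hw v hv
    have c2 : Commute (b ^ i) v := (hcomm v hv).zpow_left i
    have c3 : Commute (b ^ j) w := (hcomm w hw).zpow_left j
    have c4 : Commute (b ^ i) (b ^ j) := (Commute.refl b).zpow_zpow i j
    exact (c1.mul_left c2).mul_right (c3.symm.mul_left c4)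
  -- P is a commutative group
  letI : CommGroup ↥Pg :=
    { (inferInstance : Group ↥Pg) with
      mul_comm := fun x y => Subtype.ext (hPab x x.2 y y.2) }
  -- conjugation maps
  have hconjmem : ∀ (k : ℤ) (x : H), x ∈ Pg → (b ^ k)⁻¹ * x * b ^ k ∈ Pg := by
    intro k x hx
    have := hPnorm.conj_mem x hx (b ^ k)⁻¹
    simpa using this
  set τ : ℤ → ↥Pg →* ↥Pg := fun k =>
    MonoidHom.mk' (fun x => ⟨(b ^ k)⁻¹ * x * b ^ k, hconjmem k x x.2⟩)
      (by
        intro x y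
        apply Subtype.ext
        show (b ^ k)⁻¹ * (↑x * ↑y) * b ^ k
          = ((b ^ k)⁻¹ * ↑x * b ^ k) * ((b ^ k)⁻¹ * ↑y * b ^ k)
        group) with hτ
  have τcoe : ∀ (k : ℤ) (x : ↥Pg), (τ k x : H) = (b ^ k)⁻¹ * ↑x * b ^ k :=
    fun k x => rfl
  have τ0 : ∀ x : ↥Pg, τ 0 x = x := by
    intro x; apply Subtype.ext; rw [τcoe]; simp
  have τadd : ∀ (j k : ℤ) (x : ↥Pg), τ j (τ k x) = τ (j + k) x := by
    intro j k x
    apply Subtype.ext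
    rw [τcoe, τcoe, τcoe, add_comm j k, zpow_add]
    group
  have τper : ∀ (k : ℤ) (x : ↥Pg), τ (k + q) x = τ k x := by
    intro k x
    apply Subtype.ext
    rw [τcoe, τcoe]
    have hy : (b ^ k)⁻¹ * ↑x * b ^ k ∈ Pg := hconjmem k x x.2
    have h1 : b ^ q * ((b ^ k)⁻¹ * ↑x * b ^ k) = ((b ^ k)⁻¹ * ↑x * b ^ k) * b ^ q :=
      hbq _ hy
    have h2 : (b ^ q)⁻¹ * (((b ^ k)⁻¹ * ↑x * b ^ k) * b ^ q)
        = (b ^ k)⁻¹ * ↑x * b ^ k := by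
      rw [← h1]; group
    rw [zpow_add, zpow_natCast, ← h2]
    group
  -- injectivity of τ k
  have τinj : ∀ (k : ℤ), Function.Injective (τ k) := by
    intro k x y hxy
    have := congrArg (fun z : ↥Pg => (z : H)) hxy
    simp only [τcoe] at this
    apply Subtype.ext
    calc (x : H) = b ^ k * ((b ^ k)⁻¹ * ↑x * b ^ k) * (b ^ k)⁻¹ := by group
      _ = b ^ k * ((b ^ k)⁻¹ * ↑y * b ^ k) * (b ^ k)⁻¹ := by rw [this]
      _ = (y : H) := by group
  -- the averaging homomorphism
  set π : ↥Pg →* ↥Pg := ∏ i ∈ Finset.range q, τ (i : ℤ) with hπdef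
  have πapp : ∀ x : ↥Pg, π x = ∏ i ∈ Finset.range q, τ (i : ℤ) x := by
    intro x
    rw [hπdef]
    exact MonoidHom.finset_prod_apply _ _ _
  -- π is fixed by τ 1 and commutes with each τ k
  have πshift : ∀ x : ↥Pg,
      ∏ i ∈ Finset.range q, τ ((i : ℤ) + 1) x = ∏ i ∈ Finset.range q, τ (i : ℤ) x := by
    intro x
    have e1 : ∏ i ∈ Finset.range (q + 1), τ (i : ℤ) x
        = (∏ i ∈ Finset.range q, τ ((i : ℤ) + 1) x) * τ (0 : ℤ) x := by
      rw [Finset.prod_range_succ']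
      congr 1
    have e2 : ∏ i ∈ Finset.range (q + 1), τ (i : ℤ) x
        = (∏ i ∈ Finset.range q, τ (i : ℤ) x) * τ (q : ℤ) x := by
      rw [Finset.prod_range_succ]
    have e3 : τ (q : ℤ) x = τ (0 : ℤ) x := by
      have := τper 0 x
      rwa [zero_add] at this
    have := e1.symm.trans e2
    rw [e3] at this
    exact mul_right_cancel this
  have πfix : ∀ x : ↥Pg, τ 1 (π x) = π x := by
    intro x
    rw [πapp, map_prod]
    calc ∏ i ∈ Finset.range q, τ 1 (τ (i : ℤ) x)
        = ∏ i ∈ Finset.range q, τ ((i : ℤ) + 1) x := by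
          refine Finset.prod_congr rfl fun i _ => ?_
          rw [τadd, add_comm]
      _ = ∏ i ∈ Finset.range q, τ (i : ℤ) x := πshift x
  have πτ : ∀ (k : ℤ) (x : ↥Pg), π (τ k x) = τ k (π x) := by
    intro k x
    rw [πapp, πapp, map_prod]
    refine Finset.prod_congr rfl fun i _ => ?_
    rw [τadd, τadd, add_comm]
  have πC : ∀ x : ↥Pg, τ 1 x = x → π x = x ^ q := by
    intro x hx
    have hall : ∀ i : ℕ, τ (i : ℤ) x = x := by
      intro i
      induction i with
      | zero => exact τ0 x
      | succ i ih =>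
          have : τ ((i : ℤ) + 1) x = τ 1 (τ (i : ℤ) x) := by rw [τadd, add_comm]
          push_cast
          rw [this, ih, hx]
    rw [πapp]
    calc ∏ i ∈ Finset.range q, τ (i : ℤ) x = ∏ _i ∈ Finset.range q, x :=
          Finset.prod_congr rfl fun i _ => hall i
      _ = x ^ q := by rw [Finset.prod_const, Finset.card_range]
  -- the kernel of π, as a subgroup of H
  set W : Subgroup H :=
    { carrier := {x : H | ∃ hx : x ∈ Pg, π ⟨x, hx⟩ = 1}
      one_mem' := ⟨Pg.one_mem, by
        have : (⟨1, Pg.one_mem⟩ : ↥Pg) = 1 := rfl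
        rw [this, map_one]⟩
      mul_mem' := by
        rintro x y ⟨hx, hπx⟩ ⟨hy, hπy⟩
        refine ⟨Pg.mul_mem hx hy, ?_⟩
        have : (⟨x * y, Pg.mul_mem hx hy⟩ : ↥Pg) = ⟨x, hx⟩ * ⟨y, hy⟩ := rfl
        rw [this, map_mul, hπx, hπy, mul_one]
      inv_mem' := by
        rintro x ⟨hx, hπx⟩
        refine ⟨Pg.inv_mem hx, ?_⟩
        have : (⟨x⁻¹, Pg.inv_mem hx⟩ : ↥Pg) = (⟨x, hx⟩ : ↥Pg)⁻¹ := rfl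
        rw [this, map_inv, hπx, inv_one] } with hWdef
  have hWmem : ∀ x : H, x ∈ W ↔ ∃ hx : x ∈ Pg, π ⟨x, hx⟩ = 1 := fun x => Iff.rfl
  have hWP : ∀ x ∈ W, x ∈ Pg := by
    rintro x ⟨hx, _⟩
    exact hx
  -- W is invariant under conjugation by b
  have hWinv1 : ∀ v ∈ W, b * v * b⁻¹ ∈ W := by
    rintro v ⟨hv, hπv⟩
    have hmem : b * v * b⁻¹ ∈ Pg := hPg1 v hv
    refine ⟨hmem, ?_⟩
    have hco : (⟨b * v * b⁻¹, hmem⟩ : ↥Pg) = τ (-1) ⟨v, hv⟩ := by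
      apply Subtype.ext
      rw [τcoe]
      simp
    rw [hco, πτ, hπv, map_one]
  have hWinv2 : ∀ v ∈ W, b⁻¹ * v * b ∈ W := by
    rintro v ⟨hv, hπv⟩
    have hmem : b⁻¹ * v * b ∈ Pg := hPg2 v hv
    refine ⟨hmem, ?_⟩
    have hco : (⟨b⁻¹ * v * b, hmem⟩ : ↥Pg) = τ 1 ⟨v, hv⟩ := by
      apply Subtype.ext
      rw [τcoe]
      simp
    rw [hco, πτ, hπv, map_one]
  -- main dichotomy: π is identically 1 on P
  have hπ1 : ∀ x : ↥Pg, π x = 1 := by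
    by_contra hcon
    push_neg at hcon
    obtain ⟨c, hcπ⟩ := hcon
    -- W is a proper subgroup of Pg; form the subgroup W⟨b⟩ and use inner-abelianness
    obtain ⟨K, hK⟩ := IAaux_exists_sup b W hWinv1 hWinv2
    have hbK : b ∈ K := (hK b).mpr ⟨1, W.one_mem, 1, by simp⟩
    have hKne : K ≠ ⊤ := by
      intro hKtop
      have : (c : H) ∈ K := by rw [hKtop]; trivial
      obtain ⟨w, hw, k, hwk⟩ := (hK _).mp this
      have hbk : b ^ k ∈ Pg := by
        have : b ^ k = w⁻¹ * (c : H) := by rw [hwk]; group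
        rw [this]
        exact Pg.mul_mem (Pg.inv_mem (hWP w hw)) c.2
      have hbk1 : b ^ k = (1 : H) := htriv _ hbk (Subgroup.zpow_mem _ (Subgroup.mem_zpowers b) k)
      have hcw : (c : H) = w := by rw [hwk, hbk1, mul_one]
      have : (c : H) ∈ W := hcw ▸ hw
      obtain ⟨hc', hπc'⟩ := this
      apply hcπ
      have : (⟨(c : H), hc'⟩ : ↥Pg) = c := Subtype.ext rfl
      rw [← this]
      exact hπc'
    have hKab := hIA.2 K hKne
    -- every element of W is trivial
    have hWtriv : ∀ w ∈ W, w = (1 : H) := by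
      rintro w hw
      obtain ⟨hwP, hπw⟩ := hw
      have hwK : w ∈ K := (hK w).mpr ⟨w, ⟨hwP, hπw⟩, 0, by simp⟩
      have hcomm : b * w = w * b := hKab b w hbK hwK
      have hfix : τ 1 (⟨w, hwP⟩ : ↥Pg) = ⟨w, hwP⟩ := by
        apply Subtype.ext
        rw [τcoe, zpow_one]
        show b⁻¹ * w * b = w
        calc b⁻¹ * w * b = b⁻¹ * (w * b) := by group
          _ = b⁻¹ * (b * w) := by rw [hcomm]
          _ = w := by group
      have hwq : (⟨w, hwP⟩ : ↥Pg) ^ q = 1 := by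
        rw [← πC _ hfix, hπw]
      have hwqH : w ^ q = 1 := by
        have := congrArg (fun z : ↥Pg => (z : H)) hwq
        simpa using this
      exact hkill w (hPelem w hwP) hwqH
    -- hence π is injective
    have hπinj : Function.Injective π := by
      intro x y hxy
      have h1 : π (x * y⁻¹) = 1 := by rw [map_mul, map_inv, hxy, mul_inv_cancel]
      have h2 : ((x * y⁻¹ : ↥Pg) : H) ∈ W := ⟨(x * y⁻¹).2, by
        rw [show (⟨((x * y⁻¹ : ↥Pg) : H), (x * y⁻¹).2⟩ : ↥Pg) = x * y⁻¹ from Subtype.ext rfl]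
        exact h1⟩
      have h3 : ((x * y⁻¹ : ↥Pg) : H) = 1 := hWtriv _ h2
      have h4 : x * y⁻¹ = 1 := Subtype.ext (by simpa using h3)
      rw [← mul_inv_cancel y] at h4
      exact mul_right_cancel h4
    -- so π is surjective, and every element of P is fixed by conjugation
    have hπsurj : Function.Surjective π := Finite.injective_iff_surjective.mp hπinj
    obtain ⟨cc, hcc, hccne⟩ := hnotab
    obtain ⟨z, hz⟩ := hπsurj ⟨cc, hcc⟩
    apply hccne
    have := πfix z
    rw [hz] at this
    have := congrArg (fun w : ↥Pg => (w : H)) this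
    simpa [τcoe] using this
  -- the fixed-point-free property
  have hC : ∀ x ∈ Pg, b⁻¹ * x * b = x → x = 1 := by
    intro x hx hfix
    have hfix' : τ 1 (⟨x, hx⟩ : ↥Pg) = ⟨x, hx⟩ :=
      Subtype.ext (by rw [τcoe, zpow_one]; exact hfix)
    have hxq : (⟨x, hx⟩ : ↥Pg) ^ q = 1 := by rw [← πC _ hfix', hπ1]
    have hxqH : x ^ q = 1 := by
      have := congrArg (fun z : ↥Pg => (z : H)) hxq
      simpa using this
    exact hkill x (hPelem x hx) hxqH
  -- natural-number versions of conjugation facts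
  have hconjmemN : ∀ (i : ℕ), ∀ x ∈ Pg, (b ^ i)⁻¹ * x * b ^ i ∈ Pg := by
    intro i x hx
    have := hconjmem (i : ℤ) x hx
    rwa [zpow_natCast] at this
  have hbqconj : ∀ x ∈ Pg, (b ^ q)⁻¹ * x * b ^ q = x := by
    intro x hx
    calc (b ^ q)⁻¹ * x * b ^ q = (b ^ q)⁻¹ * (x * b ^ q) := by group
      _ = (b ^ q)⁻¹ * (b ^ q * x) := by rw [hbq x hx]
      _ = x := by group
  have hq1 : q - 1 + 1 = q := Nat.succ_pred_eq_of_pos hq.pos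
  -- (iii) : the orbit of any nontrivial element generates P
  have horbit : ∀ a ∈ Pg, a ≠ 1 →
      Subgroup.closure {x : H | ∃ i : ℕ, i < q ∧ x = (b ^ i)⁻¹ * a * b ^ i} = Pg := by
    intro a ha hane
    set S := {x : H | ∃ i : ℕ, i < q ∧ x = (b ^ i)⁻¹ * a * b ^ i} with hSdef
    set N := Subgroup.closure S with hNdef
    have hSP : S ⊆ (Pg : Set H) := by
      rintro x ⟨i, hi, rfl⟩
      exact hconjmemN i a ha
    have hNP : N ≤ Pg := (Subgroup.closure_le Pg).mpr hSP
    have haS : a ∈ S := ⟨0, hq.pos, by simp⟩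
    have haN : a ∈ N := Subgroup.subset_closure haS
    -- N is invariant under conjugation
    have hgen2 : ∀ s ∈ S, b⁻¹ * s * b ∈ N := by
      rintro s ⟨i, hi, rfl⟩
      have hform : b⁻¹ * ((b ^ i)⁻¹ * a * b ^ i) * b = (b ^ (i+1))⁻¹ * a * b ^ (i+1) := by
        rw [pow_succ]; group
      rw [hform]
      rcases Nat.lt_or_ge (i+1) q with hlt | hge
      · exact Subgroup.subset_closure ⟨i+1, hlt, rfl⟩
      · have hiq : i + 1 = q := by omega
        rw [hiq, hbqconj a ha]
        exact haN
    have hgen1 : ∀ s ∈ S, b * s * b⁻¹ ∈ N := by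
      rintro s ⟨i, hi, rfl⟩
      rcases Nat.eq_zero_or_pos i with hi0 | hi0
      · subst hi0
        have hbsplit := hbqconj a ha
        rw [← hq1, pow_succ] at hbsplit
        have hform : b * ((b ^ 0)⁻¹ * a * b ^ 0) * b⁻¹
            = (b ^ (q-1))⁻¹ * a * b ^ (q-1) := by
          calc b * ((b ^ 0)⁻¹ * a * b ^ 0) * b⁻¹ = b * a * b⁻¹ := by group
            _ = b * ((b ^ (q-1) * b)⁻¹ * a * (b ^ (q-1) * b)) * b⁻¹ := by rw [hbsplit]
            _ = (b ^ (q-1))⁻¹ * a * b ^ (q-1) := by group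
        rw [hform]
        exact Subgroup.subset_closure ⟨q-1, by omega, rfl⟩
      · obtain ⟨j, rfl⟩ : ∃ j, i = j + 1 := ⟨i - 1, by omega⟩
        have hform : b * ((b ^ (j+1))⁻¹ * a * b ^ (j+1)) * b⁻¹
            = (b ^ j)⁻¹ * a * b ^ j := by
          rw [pow_succ]; group
        rw [hform]
        exact Subgroup.subset_closure ⟨j, by omega, rfl⟩
    have hN2 : ∀ v ∈ N, b⁻¹ * v * b ∈ N := by
      have hle : N ≤ N.comap (MulAut.conj b⁻¹).toMonoidHom := by
        rw [hNdef, Subgroup.closure_le]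
        intro s hs
        show (MulAut.conj b⁻¹) s ∈ N
        have : (MulAut.conj b⁻¹) s = b⁻¹ * s * b := by
          rw [MulAut.conj_apply]; group
        rw [this]
        exact hgen2 s hs
      intro v hv
      have := hle hv
      rw [Subgroup.mem_comap] at this
      have he : (MulAut.conj b⁻¹).toMonoidHom v = b⁻¹ * v * b := by
        show (MulAut.conj b⁻¹) v = b⁻¹ * v * b
        rw [MulAut.conj_apply]; group
      rwa [he] at this
    have hN1 : ∀ v ∈ N, b * v * b⁻¹ ∈ N := by
      have hle : N ≤ N.comap (MulAut.conj b).toMonoidHom := by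
        rw [hNdef, Subgroup.closure_le]
        intro s hs
        show (MulAut.conj b) s ∈ N
        rw [MulAut.conj_apply]
        exact hgen1 s hs
      intro v hv
      have := hle hv
      rw [Subgroup.mem_comap] at this
      have he : (MulAut.conj b).toMonoidHom v = b * v * b⁻¹ := by
        show (MulAut.conj b) v = b * v * b⁻¹
        rw [MulAut.conj_apply]
      rwa [he] at this
    -- form the subgroup N⟨b⟩
    obtain ⟨K, hK⟩ := IAaux_exists_sup b N hN1 hN2
    have hbK : b ∈ K := (hK b).mpr ⟨1, N.one_mem, 1, by simp⟩
    have haK : a ∈ K := (hK a).mpr ⟨a, haN, 0, by simp⟩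
    have hKtop : K = ⊤ := by
      by_contra hKne
      have hcomm : a * b = b * a := hIA.2 K hKne a b haK hbK
      apply hane
      apply hC a ha
      calc b⁻¹ * a * b = b⁻¹ * (a * b) := by group
        _ = b⁻¹ * (b * a) := by rw [hcomm]
        _ = a := by group
    have hPN : Pg ≤ N := by
      intro x hx
      have : x ∈ K := by rw [hKtop]; trivial
      obtain ⟨w, hw, k, hwk⟩ := (hK x).mp this
      have hbk : b ^ k ∈ Pg := by
        have hrw : b ^ k = w⁻¹ * x := by rw [hwk]; group
        rw [hrw]
        exact Pg.mul_mem (Pg.inv_mem (hNP hw)) hx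
      have hbk1 : b ^ k = (1 : H) :=
        htriv _ hbk (Subgroup.zpow_mem _ (Subgroup.mem_zpowers b) k)
      rw [hwk, hbk1, mul_one]
      exact hw
    exact le_antisymm hNP hPN
  -- P is nontrivial
  have hPnt : ∃ a : H, a ∈ Pg ∧ a ≠ 1 := by
    by_contra hcon
    push_neg at hcon
    apply hIA.1
    intro x y
    obtain ⟨w, hw, k, rfl⟩ := hdecomp x
    obtain ⟨v, hv, l, rfl⟩ := hdecomp y
    rw [hcon w hw, hcon v hv, one_mul, one_mul]
    exact (Commute.refl b).zpow_zpow k l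
  -- exponent p on ↥Pg
  have hexpP : ∀ z : ↥Pg, z ^ p = 1 := by
    intro z
    apply Subtype.ext
    have : ((z ^ p : ↥Pg) : H) = (z : H) ^ p := by push_cast; ring_nf
    rw [this, hPelem (z : H) z.2]
    rfl
  -- (iv) : n < q
  have hnq : n < q := by
    obtain ⟨a, ha, hane⟩ := hPnt
    have hNP := horbit a ha hane
    set g : Fin (q-1) → ↥Pg := fun i => τ ((i : ℕ) : ℤ) ⟨a, ha⟩ with hgdef
    set T : Subgroup ↥Pg := Subgroup.closure (Set.range g) with hTdef
    have hlast : τ (((q-1 : ℕ)) : ℤ) ⟨a, ha⟩ ∈ T := by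
      have h1 : ∏ i ∈ Finset.range q, τ (i : ℤ) (⟨a, ha⟩ : ↥Pg) = 1 := by
        rw [← πapp]; exact hπ1 _
      rw [← hq1, Finset.prod_range_succ] at h1
      have h2 : τ (((q-1 : ℕ)) : ℤ) (⟨a, ha⟩ : ↥Pg)
          = (∏ i ∈ Finset.range (q-1), τ (i : ℤ) (⟨a, ha⟩ : ↥Pg))⁻¹ := by
        rw [eq_inv_iff_mul_eq_one, mul_comm]
        exact h1
      rw [h2]
      refine Subgroup.inv_mem _ (Subgroup.prod_mem _ fun i hi => ?_)
      rw [Finset.mem_range] at hi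
      exact Subgroup.subset_closure ⟨⟨i, hi⟩, rfl⟩
    have hTmem : ∀ i : ℕ, i < q → τ (i : ℤ) (⟨a, ha⟩ : ↥Pg) ∈ T := by
      intro i hi
      rcases Nat.lt_or_ge i (q-1) with hlt | hge
      · exact Subgroup.subset_closure ⟨⟨i, hlt⟩, rfl⟩
      · have : i = q - 1 := by omega
        rw [this]
        exact hlast
    have hTtop : T = ⊤ := by
      rw [eq_top_iff]
      intro x _
      have hx : (x : H) ∈ Pg := x.2
      have hxN : (x : H) ∈ Subgroup.closure
          {y : H | ∃ i : ℕ, i < q ∧ y = (b ^ i)⁻¹ * a * b ^ i} := by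
        rw [hNP]; exact hx
      have hmap : (x : H) ∈ T.map Pg.subtype := by
        refine (Subgroup.closure_le (T.map Pg.subtype)).mpr ?_ hxN
        rintro y ⟨i, hi, rfl⟩
        refine ⟨τ (i : ℤ) ⟨a, ha⟩, hTmem i hi, ?_⟩
        rw [Subgroup.coe_subtype, τcoe, zpow_natCast]
      obtain ⟨y, hy, hyx⟩ := hmap
      have : y = x := Subtype.ext (by simpa using hyx)
      rwa [← this]
    have hcard : Nat.card ↥Pg ≤ p ^ (q - 1) :=
      IAaux_card_le p hp.pos hexpP (q-1) g hTtop
    rw [hPcard] at hcard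
    have := (Nat.pow_le_pow_iff_right hp.one_lt).mp hcard
    omega
  -- (v) : q ∣ p ^ n - 1
  have hdvd : q ∣ p ^ n - 1 := by
    haveI : Fact q.Prime := ⟨hq⟩
    haveI : NeZero q := ⟨hq.pos.ne'⟩
    -- periodicity of τ on natural numbers
    have hshift : ∀ (j : ℕ) (k : ℤ) (x : ↥Pg), τ (k + q * j) x = τ k x := by
      intro j
      induction j with
      | zero => intro k x; simp
      | succ j ih =>
          intro k x
          have harg : (k + (q : ℤ) * ((j : ℕ) + 1 : ℕ)) = (k + q * j) + q := by
            push_cast; ring_nf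
          rw [harg, τper, ih]
    have hτmod : ∀ (m : ℕ) (x : ↥Pg), τ (m : ℤ) x = τ ((m % q : ℕ) : ℤ) x := by
      intro m x
      have h0 : m % q + q * (m / q) = m := Nat.mod_add_div m q
      have h1 : ((m : ℕ) : ℤ) = ((m % q : ℕ) : ℤ) + (q : ℤ) * ((m / q : ℕ) : ℤ) := by
        exact_mod_cast congrArg (fun t : ℕ => (t : ℤ)) h0.symm
      rw [h1, hshift]
    have τne : ∀ (k : ℤ) (x : ↥Pg), x ≠ 1 → τ k x ≠ 1 := by
      intro k x hx h
      exact hx (τinj k (h.trans (map_one (τ k)).symm))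
    -- the action of Z/q on the nonidentity elements of P
    letI : SMul (Multiplicative (ZMod q)) {x : ↥Pg // x ≠ 1} :=
      ⟨fun g x => ⟨τ (((Multiplicative.toAdd g).val : ℕ) : ℤ) x.1, τne _ _ x.2⟩⟩
    have hsmul : ∀ (g : Multiplicative (ZMod q)) (x : {x : ↥Pg // x ≠ 1}),
        (g • x).1 = τ (((Multiplicative.toAdd g).val : ℕ) : ℤ) x.1 := fun _ _ => rfl
    letI : MulAction (Multiplicative (ZMod q)) {x : ↥Pg // x ≠ 1} :=
      { one_smul := by
          intro x
          apply Subtype.ext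
          rw [hsmul]
          have : (Multiplicative.toAdd (1 : Multiplicative (ZMod q))).val = 0 := by
            simp [ZMod.val_zero]
          rw [this]
          exact τ0 x.1
        mul_smul := by
          intro g h x
          apply Subtype.ext
          rw [hsmul, hsmul, hsmul]
          have h1 : (Multiplicative.toAdd (g * h)).val
              = ((Multiplicative.toAdd g).val + (Multiplicative.toAdd h).val) % q := by
            rw [toAdd_mul, ZMod.val_add]
          rw [h1, ← hτmod]
          have h2 : (((Multiplicative.toAdd g).val + (Multiplicative.toAdd h).val : ℕ) : ℤ)
              = ((Multiplicative.toAdd g).val : ℤ) + ((Multiplicative.toAdd h).val : ℤ) := by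
            push_cast; ring_nf
          rw [h2, ← τadd] }
    -- Z/q is a q-group
    have hZq : IsPGroup q (Multiplicative (ZMod q)) := by
      apply IsPGroup.of_card (n := 1)
      rw [pow_one]
      have : Nat.card (Multiplicative (ZMod q)) = Nat.card (ZMod q) := rfl
      rw [this, Nat.card_zmod]
    -- no fixed points
    haveI hfpe : IsEmpty
        (MulAction.fixedPoints (Multiplicative (ZMod q)) {x : ↥Pg // x ≠ 1}) := by
      constructor
      rintro ⟨⟨x, hxne⟩, hfix⟩
      have h1 := hfix (Multiplicative.ofAdd (1 : ZMod q))
      have h2 := congrArg (fun z : {x : ↥Pg // x ≠ 1} => ((z.1 : ↥Pg) : H)) h1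
      simp only [hsmul] at h2
      haveI : Fact (1 < q) := ⟨hq.one_lt⟩
      rw [show (Multiplicative.toAdd (Multiplicative.ofAdd (1 : ZMod q))).val = 1 by
        simp [ZMod.val_one]] at h2
      have h3 : (τ (1 : ℤ) x : H) = (x : H) := h2
      rw [τcoe, zpow_one] at h3
      exact hxne (Subtype.ext (hC (x : H) x.2 h3))
    have hmodeq := hZq.card_modEq_card_fixedPoints {x : ↥Pg // x ≠ 1}
    have hfz : Nat.card
        (MulAction.fixedPoints (Multiplicative (ZMod q)) {x : ↥Pg // x ≠ 1}) = 0 :=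
      Nat.card_of_isEmpty
    rw [hfz] at hmodeq
    -- count the nonidentity elements
    have hcount : Nat.card {x : ↥Pg // x ≠ 1} = p ^ n - 1 := by
      classical
      letI : Fintype ↥Pg := Fintype.ofFinite _
      have hc1 : Nat.card {x : ↥Pg // x ≠ 1} = Fintype.card {x : ↥Pg // x ≠ 1} :=
        Nat.card_eq_fintype_card
      have hc2 : Fintype.card {x : ↥Pg // x ≠ 1}
          = Fintype.card ↥Pg - Fintype.card {x : ↥Pg // x = 1} := by
        exact Fintype.card_subtype_compl _
      have hc3 : Fintype.card {x : ↥Pg // x = 1} = 1 := Fintype.card_subtype_eq _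
      have hc4 : Fintype.card ↥Pg = p ^ n := by
        rw [← Nat.card_eq_fintype_card, hPcard]
      rw [hc1, hc2, hc3, hc4]
    rw [hcount] at hmodeq
    exact (Nat.modEq_zero_iff_dvd).mp hmodeq
  -- assemble the conclusions
  refine ⟨?_, ?_, ?_, horbit, hnq, hdvd⟩
  · intro x hx hcomm
    apply hC x hx
    have h1 : x * b = b * x := hcomm b (Subgroup.mem_zpowers b)
    calc b⁻¹ * x * b = b⁻¹ * (x * b) := by group
      _ = b⁻¹ * (b * x) := by rw [h1]
      _ = x := by group
  · intro x hx hxne hfix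
    exact hxne (hC x hx hfix)
  · exact hbqconj
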